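/- (Cramér–Wold theorem) Let d ≥ 2 and let P, Q be Borel probability measures on ℝ^d. If for every x ∈ ℝ^d the pushforward of P under the map y ↦ ⟨x, y⟩ from ℝ^d to ℝ equals the pushforward of Q under the same map, then P = Q. -/

import Mathlib

open MeasureTheory
open scoped RealInnerProductSpace

open MeasureTheory Filter Metric Set Real
open scoped RealInnerProductSpace FourierTransform SchwartzMap Topology ContDiff Manifold

variable {V : Type*} [NormedAddCommGroup V] [InnerProductSpace ℝ V]
  [FiniteDimensional ℝ V] [MeasurableSpace V] [BorelSpace V]

/-- A smooth compactly supported function is a Schwartz function. -/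
noncomputable def toSchwartzOfCompactSupport (g : V → ℂ) (hg : ContDiff ℝ ∞ g)
    (h2 : HasCompactSupport g) : 𝓢(V, ℂ) where
  toFun := g
  smooth' := hg
  decay' := by
    intro k n
    have hcont : Continuous fun x : V => ‖x‖ ^ k * ‖iteratedFDeriv ℝ n g x‖ := by
      have := (hg.continuous_iteratedFDeriv (m := n) (by exact_mod_cast le_top)).norm
      fun_prop
    have hsupp : HasCompactSupport fun x : V => ‖x‖ ^ k * ‖iteratedFDeriv ℝ n g x‖ :=
      ((h2.iteratedFDeriv n).norm).mul_left
    obtain ⟨C, hC⟩ := hcont.bounded_above_of_compact_support hsupp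
    refine ⟨C, fun x => ?_⟩
    have := hC x
    rwa [Real.norm_of_nonneg (by positivity)] at this

lemma char_integral (μ : Measure V) [IsProbabilityMeasure μ] (f : 𝓢(V, ℂ)) :
    ∫ y, f y ∂μ
      = ∫ ξ, (∫ y, Complex.exp ((2 * π * ⟪ξ, y⟫ : ℝ) * Complex.I) ∂μ)
          * ((SchwartzMap.fourierTransformCLM ℂ f) ξ) := by
  set F : 𝓢(V, ℂ) := SchwartzMap.fourierTransformCLM ℂ f with hFdef
  have hFf : ⇑F = 𝓕 ⇑f := rfl
  have hinv : ∀ y, f y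
      = ∫ ξ, Complex.exp ((2 * π * ⟪ξ, y⟫ : ℝ) * Complex.I) * F ξ := by
    intro y
    conv_lhs => rw [← Continuous.fourierInv_fourier_eq f.continuous f.integrable
      (by rw [← hFf]; exact F.integrable)]
    rw [Real.fourierInv_eq']
    simp [smul_eq_mul, hFf]
  have hcont : Continuous fun p : V × V =>
      Complex.exp ((2 * π * ⟪p.2, p.1⟫ : ℝ) * Complex.I) * F p.2 := by
    apply Continuous.mul
    · apply Complex.continuous_exp.comp
      apply Continuous.mul _ continuous_const
      exact Complex.continuous_ofReal.comp
        (continuous_const.mul (continuous_snd.inner continuous_fst))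
    · exact F.continuous.comp continuous_snd
  have hb : Integrable (fun p : V × V => ‖F p.2‖) (μ.prod volume) := by
    have h1 : Integrable (fun ξ => ‖F ξ‖) (Measure.map Prod.snd (μ.prod volume)) := by
      rw [Measure.map_snd_prod]
      simp [measure_univ]
      exact F.integrable.norm
    exact h1.comp_measurable measurable_snd
  have hInt : Integrable (Function.uncurry fun y ξ =>
      Complex.exp ((2 * π * ⟪ξ, y⟫ : ℝ) * Complex.I) * F ξ) (μ.prod volume) := by
    apply hb.mono' hcont.aestronglyMeasurable
    filter_upwards with p
    simp only [Function.uncurry, norm_mul, Complex.norm_exp_ofReal_mul_I, one_mul, le_refl]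
  calc ∫ y, f y ∂μ
      = ∫ y, ∫ ξ, Complex.exp ((2 * π * ⟪ξ, y⟫ : ℝ) * Complex.I) * F ξ ∂volume ∂μ := by
        exact integral_congr_ae (Eventually.of_forall fun y => hinv y)
    _ = ∫ ξ, ∫ y, Complex.exp ((2 * π * ⟪ξ, y⟫ : ℝ) * Complex.I) * F ξ ∂μ ∂volume :=
        integral_integral_swap hInt
    _ = ∫ ξ, (∫ y, Complex.exp ((2 * π * ⟪ξ, y⟫ : ℝ) * Complex.I) ∂μ) * F ξ ∂volume := by
        refine integral_congr_ae (Eventually.of_forall fun ξ => ?_)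
        simp only [integral_mul_const]

lemma measure_compact_le_of_schwartz_integral {μ ν : Measure V}
    [IsProbabilityMeasure μ] [IsProbabilityMeasure ν]
    (hint : ∀ f : 𝓢(V, ℂ), ∫ y, f y ∂μ = ∫ y, f y ∂ν)
    {K : Set V} (hK : IsCompact K) : μ K ≤ ν K := by
  rw [Set.measure_eq_iInf_isOpen K ν]
  refine le_iInf fun U => le_iInf fun hKU => le_iInf fun hU => ?_
  obtain ⟨ε, εpos, hcth⟩ := hK.exists_cthickening_subset_open hU hKU
  obtain ⟨g, hg0, hg1, hg01⟩ := exists_contMDiffMap_zero_one_of_isClosed (𝓘(ℝ, V)) (n := (⊤ : ℕ∞))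
    (isOpen_thickening.isClosed_compl) hK.isClosed
    (disjoint_left.mpr fun x hx hxK => hx (self_subset_thickening εpos K hxK))
  have hgc : ContDiff ℝ ∞ (g : V → ℝ) := contMDiff_iff_contDiff.mp g.contMDiff
  have hsuppsub : Function.support (g : V → ℝ) ⊆ thickening ε K := by
    intro x hx
    by_contra h'
    exact hx (hg0 h')
  have hsupp : HasCompactSupport (g : V → ℝ) := by
    apply HasCompactSupport.of_support_subset_isCompact hK.cthickening
    exact hsuppsub.trans (thickening_subset_cthickening ε K)
  have hgcont : Continuous (g : V → ℝ) := hgc.continuous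
  have hgint : ∀ (ρ : Measure V) [IsProbabilityMeasure ρ], Integrable (g : V → ℝ) ρ :=
    fun ρ _ => hgcont.integrable_of_hasCompactSupport hsupp
  set gC : V → ℂ := fun x => ((g x : ℝ) : ℂ) with hgCdef
  have hgCc : ContDiff ℝ ∞ gC := Complex.ofRealCLM.contDiff.comp hgc
  have hgCs : HasCompactSupport gC := hsupp.comp_left (g := Complex.ofReal) Complex.ofReal_zero
  have hint' := hint (toSchwartzOfCompactSupport gC hgCc hgCs)
  have hreal : ∫ y, (g y : ℝ) ∂μ = ∫ y, (g y : ℝ) ∂ν := by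
    have h2 : ∫ y, ((g y : ℝ) : ℂ) ∂μ = ∫ y, ((g y : ℝ) : ℂ) ∂ν := hint'
    have e1 : ∫ y, ((g y : ℝ) : ℂ) ∂μ = ((∫ y, (g y : ℝ) ∂μ : ℝ) : ℂ) :=
      integral_ofReal (𝕜 := ℂ)
    have e2 : ∫ y, ((g y : ℝ) : ℂ) ∂ν = ((∫ y, (g y : ℝ) ∂ν : ℝ) : ℂ) :=
      integral_ofReal (𝕜 := ℂ)
    rw [e1, e2] at h2
    exact_mod_cast h2
  have h1 : (μ K).toReal ≤ ∫ y, (g y : ℝ) ∂μ := by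
    have heq : ∫ y, K.indicator (fun _ => (1 : ℝ)) y ∂μ = (μ K).toReal := by
      rw [integral_indicator_const _ hK.measurableSet]; simp [measureReal_def]
    rw [← heq]
    refine integral_mono ((integrable_const (1 : ℝ)).indicator hK.measurableSet) (hgint μ) ?_
    intro x
    by_cases hx : x ∈ K
    · simp only [indicator_of_mem hx]
      exact le_of_eq (by simpa using (hg1 hx).symm)
    · simp [indicator_of_notMem hx, (hg01 x).1]
  have h2 : ∫ y, (g y : ℝ) ∂ν ≤ (ν U).toReal := by
    have heq : ∫ y, U.indicator (fun _ => (1 : ℝ)) y ∂ν = (ν U).toReal := by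
      rw [integral_indicator_const _ hU.measurableSet]; simp [measureReal_def]
    rw [← heq]
    refine integral_mono (hgint ν) ((integrable_const (1 : ℝ)).indicator hU.measurableSet) ?_
    intro x
    by_cases hx : x ∈ U
    · simp [indicator_of_mem hx, (hg01 x).2]
    · have hx0 : g x = 0 := by
        by_contra h0
        exact hx (hcth (thickening_subset_cthickening ε K (hsuppsub h0)))
      simp [indicator_of_notMem hx, hx0]
  have hle : (μ K).toReal ≤ (ν U).toReal := h1.trans (hreal.le.trans h2)
  calc μ K = ENNReal.ofReal (μ K).toReal := (ENNReal.ofReal_toReal (measure_ne_top μ K)).symm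
    _ ≤ ENNReal.ofReal (ν U).toReal := ENNReal.ofReal_le_ofReal hle
    _ = ν U := ENNReal.ofReal_toReal (measure_ne_top ν U)

/-- **Cramér–Wold.** If two Borel probability measures on `ℝ^d` (`d ≥ 2`) have
equal pushforwards under every linear functional `y ↦ ⟨x, y⟩`, then they are equal. -/
theorem cramer_wold
    {d : ℕ} (hd : 2 ≤ d)
    (P Q : Measure (EuclideanSpace ℝ (Fin d)))
    [IsProbabilityMeasure P] [IsProbabilityMeasure Q]
    (h : ∀ x : EuclideanSpace ℝ (Fin d),
      P.map (fun y => ⟪x, y⟫) = Q.map (fun y => ⟪x, y⟫)) :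
    P = Q := by
  set V := EuclideanSpace ℝ (Fin d)
  have hchar : ∀ ξ : V, ∫ y, Complex.exp ((2 * π * ⟪ξ, y⟫ : ℝ) * Complex.I) ∂P
      = ∫ y, Complex.exp ((2 * π * ⟪ξ, y⟫ : ℝ) * Complex.I) ∂Q := by
    intro ξ
    have hcont : Continuous fun y : V => ⟪ξ, y⟫ := continuous_const.inner continuous_id
    have hsm : ∀ m : Measure ℝ,
        AEStronglyMeasurable (fun t : ℝ => Complex.exp ((2 * π * t : ℝ) * Complex.I)) m := by
      intro m
      exact (Complex.continuous_exp.comp ((Complex.continuous_ofReal.comp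
        (continuous_const.mul continuous_id)).mul continuous_const)).aestronglyMeasurable
    calc ∫ y, Complex.exp ((2 * π * ⟪ξ, y⟫ : ℝ) * Complex.I) ∂P
        = ∫ t, Complex.exp ((2 * π * t : ℝ) * Complex.I) ∂(P.map fun y => ⟪ξ, y⟫) :=
          (integral_map hcont.aemeasurable (hsm _)).symm
      _ = ∫ t, Complex.exp ((2 * π * t : ℝ) * Complex.I) ∂(Q.map fun y => ⟪ξ, y⟫) := by
          rw [h ξ]
      _ = ∫ y, Complex.exp ((2 * π * ⟪ξ, y⟫ : ℝ) * Complex.I) ∂Q :=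
          integral_map hcont.aemeasurable (hsm _)
  have hS : ∀ f : 𝓢(V, ℂ), ∫ y, f y ∂P = ∫ y, f y ∂Q := by
    intro f
    rw [char_integral P f, char_integral Q f]
    exact integral_congr_ae (Eventually.of_forall fun ξ => by simp only []; rw [hchar ξ])
  have hKeq : ∀ K : Set V, IsCompact K → P K = Q K := fun K hK =>
    le_antisymm (measure_compact_le_of_schwartz_integral hS hK)
      (measure_compact_le_of_schwartz_integral (fun f => (hS f).symm) hK)
  ext s hs
  rw [hs.measure_eq_iSup_isCompact, hs.measure_eq_iSup_isCompact]
  exact iSup_congr fun K => iSup_congr fun hKs => iSup_congr fun hKc => hKeq K hKc
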